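/- Let n be even and q a Paninski-type perturbed distribution on [n] (q_{2ℓ+1} = (1+z_ℓcε)/n, q_{2ℓ+2} = (1-z_ℓcε)/n for z ∈ {-1,1}^{n/2}). Then every unimodal probability distribution p on [n] satisfies d_TV(p,q) ≥ cε/4 - cε/(2n) - 1/2·(2/n). -/
import Mathlib


open Finset

/-- Every unimodal distribution `p` on `[n]` is at total variation distance at least
`cε/4 - cε/(2n) - (1/2)·(2/n)` from any Paninski perturbed distribution `q`. -/
theorem unimodal_far_from_paninski (n : ℕ) (hn : 0 < n) (hne : Even n) (c ε : ℝ)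
    (hc : 0 < c) (hε : 0 < ε) (hcε : c * ε ≤ 1)
    (z : ℕ → ℝ) (hz : ∀ ℓ < n / 2, z ℓ = 1 ∨ z ℓ = -1)
    (q : ℕ → ℝ)
    (hq : ∀ ℓ < n / 2, q (2 * ℓ) = (1 + z ℓ * c * ε) / n ∧
      q (2 * ℓ + 1) = (1 - z ℓ * c * ε) / n)
    (p : ℕ → ℝ) (hp0 : ∀ i, 0 ≤ p i) (hp1 : ∑ i ∈ Finset.range n, p i = 1)
    (huni : ∃ m : ℕ, (∀ i, i + 1 ≤ m → p i ≤ p (i + 1)) ∧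
      (∀ i, m ≤ i → i + 1 < n → p (i + 1) ≤ p i)) :
    c * ε / 4 - c * ε / (2 * n) - (1 / 2) * (2 / n) ≤
      (1 / 2) * ∑ i ∈ Finset.range n, |p i - q i| := by
  classical
  obtain ⟨m, hm1, hm2⟩ := huni
  set M := n / 2 with hM
  have h2M : 2 * M = n := Nat.mul_div_cancel' hne.two_dvd
  have hnR : (0 : ℝ) < n := by exact_mod_cast hn
  have hnne : (n : ℝ) ≠ 0 := ne_of_gt hnR
  set u : ℝ := 1 / n with hu
  set δ : ℝ := c * ε / n with hδdef
  have hδ : 0 < δ := by positivity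
  -- monotone chains
  have inc0 : ∀ i k, i + k ≤ m → p i ≤ p (i + k) := by
    intro i k
    induction k with
    | zero => intro _; simp
    | succ k ih =>
      intro h
      have h2 : i + (k + 1) = (i + k) + 1 := by omega
      rw [h2]
      calc p i ≤ p (i + k) := ih (by omega)
        _ ≤ p (i + k + 1) := hm1 _ (by omega)
  have inc' : ∀ i j, i ≤ j → j ≤ m → p i ≤ p j := by
    intro i j hij hjm
    obtain ⟨k, rfl⟩ := Nat.exists_eq_add_of_le hij
    exact inc0 i k hjm
  have dec0 : ∀ i k, m ≤ i → i + k < n → p (i + k) ≤ p i := by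
    intro i k hmi
    induction k with
    | zero => intro _; simp
    | succ k ih =>
      intro h
      have h2 : i + (k + 1) = (i + k) + 1 := by omega
      rw [h2]
      calc p (i + k + 1) ≤ p (i + k) := hm2 _ (by omega) (by omega)
        _ ≤ p i := ih (by omega)
  have dec' : ∀ i j, m ≤ i → i ≤ j → j < n → p j ≤ p i := by
    intro i j hmi hij hjn
    obtain ⟨k, rfl⟩ := Nat.exists_eq_add_of_le hij
    exact dec0 i k hmi hjn
  -- q values in u ± δ form
  have hpair : ∀ ℓ, ℓ < M → q (2 * ℓ) = u + z ℓ * δ ∧ q (2 * ℓ + 1) = u - z ℓ * δ := by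
    intro ℓ hℓ
    obtain ⟨h1, h2⟩ := hq ℓ hℓ
    constructor
    · rw [h1, hu, hδdef]; ring
    · rw [h2, hu, hδdef]; ring
  -- key per-pair analysis: a bad pair straddles level u
  have key : ∀ ℓ, ℓ < M →
      ¬ (δ ≤ |p (2 * ℓ) - q (2 * ℓ)| + |p (2 * ℓ + 1) - q (2 * ℓ + 1)|) →
      (2 * ℓ + 1 ≤ m ∧ p (2 * ℓ) < u ∧ u < p (2 * ℓ + 1)) ∨
      (m ≤ 2 * ℓ ∧ u < p (2 * ℓ) ∧ p (2 * ℓ + 1) < u) := by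
    intro ℓ hℓ hbad
    obtain ⟨hqa, hqb⟩ := hpair ℓ hℓ
    have ha1 : p (2 * ℓ) - q (2 * ℓ) ≤ |p (2 * ℓ) - q (2 * ℓ)| := le_abs_self _
    have ha2 : q (2 * ℓ) - p (2 * ℓ) ≤ |p (2 * ℓ) - q (2 * ℓ)| := by
      rw [abs_sub_comm]; exact le_abs_self _
    have hb1 : p (2 * ℓ + 1) - q (2 * ℓ + 1) ≤ |p (2 * ℓ + 1) - q (2 * ℓ + 1)| :=
      le_abs_self _
    have hb2 : q (2 * ℓ + 1) - p (2 * ℓ + 1) ≤ |p (2 * ℓ + 1) - q (2 * ℓ + 1)| := by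
      rw [abs_sub_comm]; exact le_abs_self _
    have habs_a : 0 ≤ |p (2 * ℓ) - q (2 * ℓ)| := abs_nonneg _
    have habs_b : 0 ≤ |p (2 * ℓ + 1) - q (2 * ℓ + 1)| := abs_nonneg _
    have hbn : 2 * ℓ + 1 < n := by omega
    by_cases hpos : 2 * ℓ + 1 ≤ m
    · -- increasing side
      have hmono : p (2 * ℓ) ≤ p (2 * ℓ + 1) := hm1 _ hpos
      rcases hz ℓ hℓ with hz1 | hz1
      · -- z = 1 : always good
        rw [hz1] at hqa hqb
        exact absurd (by linarith : δ ≤ _) hbad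
      · -- z = -1 : bad forces straddle up
        rw [hz1] at hqa hqb
        left
        refine ⟨hpos, ?_, ?_⟩
        · by_contra h
          push_neg at h
          exact hbad (by linarith)
        · by_contra h
          push_neg at h
          exact hbad (by linarith)
    · -- decreasing side
      have hm2ℓ : m ≤ 2 * ℓ := by omega
      have hmono : p (2 * ℓ + 1) ≤ p (2 * ℓ) := hm2 _ hm2ℓ hbn
      rcases hz ℓ hℓ with hz1 | hz1
      · -- z = 1 : bad forces straddle down
        rw [hz1] at hqa hqb
        right
        refine ⟨hm2ℓ, ?_, ?_⟩
        · by_contra h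
          push_neg at h
          exact hbad (by linarith)
        · by_contra h
          push_neg at h
          exact hbad (by linarith)
      · -- z = -1 : always good
        rw [hz1] at hqa hqb
        exact absurd (by linarith : δ ≤ _) hbad
  -- bad sets
  set Bi := (range M).filter
      (fun ℓ => 2 * ℓ + 1 ≤ m ∧ p (2 * ℓ) < u ∧ u < p (2 * ℓ + 1)) with hBi
  set Bd := (range M).filter
      (fun ℓ => m ≤ 2 * ℓ ∧ u < p (2 * ℓ) ∧ p (2 * ℓ + 1) < u) with hBd
  set B := (range M).filter
      (fun ℓ => ¬ (δ ≤ |p (2 * ℓ) - q (2 * ℓ)| + |p (2 * ℓ + 1) - q (2 * ℓ + 1)|)) with hB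
  have hBsub : B ⊆ Bi ∪ Bd := by
    intro ℓ hℓ
    rw [hB, mem_filter, mem_range] at hℓ
    rcases key ℓ hℓ.1 hℓ.2 with h | h
    · exact mem_union_left _ (by rw [hBi, mem_filter, mem_range]; exact ⟨hℓ.1, h⟩)
    · exact mem_union_right _ (by rw [hBd, mem_filter, mem_range]; exact ⟨hℓ.1, h⟩)
  have hBi1 : Bi.card ≤ 1 := by
    refine card_le_one.2 ?_
    intro a ha b hb
    rw [hBi, mem_filter, mem_range] at ha hb
    by_contra hne'
    rcases lt_trichotomy a b with h | h | h
    · have h1 : p (2 * a + 1) ≤ p (2 * b) := inc' _ _ (by omega) (by omega)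
      linarith [ha.2.2.2, hb.2.2.1]
    · exact hne' h
    · have h1 : p (2 * b + 1) ≤ p (2 * a) := inc' _ _ (by omega) (by omega)
      linarith [hb.2.2.2, ha.2.2.1]
  have hBd1 : Bd.card ≤ 1 := by
    refine card_le_one.2 ?_
    intro a ha b hb
    rw [hBd, mem_filter, mem_range] at ha hb
    by_contra hne'
    rcases lt_trichotomy a b with h | h | h
    · have h1 : p (2 * b) ≤ p (2 * a + 1) := dec' _ _ (by omega) (by omega) (by omega)
      linarith [ha.2.2.2, hb.2.2.1]
    · exact hne' h
    · have h1 : p (2 * a) ≤ p (2 * b + 1) := dec' _ _ (by omega) (by omega) (by omega)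
      linarith [hb.2.2.2, ha.2.2.1]
  have hBcard : B.card ≤ 2 := by
    calc B.card ≤ (Bi ∪ Bd).card := card_le_card hBsub
      _ ≤ Bi.card + Bd.card := card_union_le _ _
      _ ≤ 2 := by omega
  -- sum lower bound
  have hgood : ∀ ℓ ∈ range M \ B,
      δ ≤ |p (2 * ℓ) - q (2 * ℓ)| + |p (2 * ℓ + 1) - q (2 * ℓ + 1)| := by
    intro ℓ hℓ
    rw [mem_sdiff] at hℓ
    by_contra h
    exact hℓ.2 (by rw [hB, mem_filter]; exact ⟨hℓ.1, h⟩)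
  have hsum1 : ((range M \ B).card : ℝ) * δ ≤
      ∑ ℓ ∈ range M, (|p (2 * ℓ) - q (2 * ℓ)| + |p (2 * ℓ + 1) - q (2 * ℓ + 1)|) := by
    calc ((range M \ B).card : ℝ) * δ = ∑ _ℓ ∈ range M \ B, δ := by
          rw [sum_const, nsmul_eq_mul]
      _ ≤ ∑ ℓ ∈ range M \ B, (|p (2 * ℓ) - q (2 * ℓ)| + |p (2 * ℓ + 1) - q (2 * ℓ + 1)|) :=
          sum_le_sum hgood
      _ ≤ ∑ ℓ ∈ range M, (|p (2 * ℓ) - q (2 * ℓ)| + |p (2 * ℓ + 1) - q (2 * ℓ + 1)|) := by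
          refine sum_le_sum_of_subset_of_nonneg (sdiff_subset) ?_
          intro i _ _
          positivity
  have hBsubR : B ⊆ range M := by rw [hB]; exact filter_subset _ _
  have hcard : M ≤ (range M \ B).card + 2 := by
    have h1 : (range M \ B).card = M - B.card := by
      rw [card_sdiff_of_subset hBsubR, card_range]
    have h2 : B.card ≤ M := by
      calc B.card ≤ (range M).card := card_le_card hBsubR
        _ = M := card_range M
    omega
  -- splitting the sum into pairs
  have hsplit : ∀ N : ℕ, ∀ g : ℕ → ℝ,
      ∑ i ∈ range (2 * N), g i = ∑ ℓ ∈ range N, (g (2 * ℓ) + g (2 * ℓ + 1)) := by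
    intro N g
    induction N with
    | zero => simp
    | succ N ih =>
      have h1 : 2 * (N + 1) = 2 * N + 1 + 1 := by ring
      rw [h1, sum_range_succ, sum_range_succ, ih, sum_range_succ]
      ring
  have htotal : ∑ i ∈ range n, |p i - q i| =
      ∑ ℓ ∈ range M, (|p (2 * ℓ) - q (2 * ℓ)| + |p (2 * ℓ + 1) - q (2 * ℓ + 1)|) := by
    rw [← h2M]
    exact hsplit M (fun i => |p i - q i|)
  have hcardR : (M : ℝ) - 2 ≤ ((range M \ B).card : ℝ) := by
    have : (M : ℝ) ≤ ((range M \ B).card : ℝ) + 2 := by exact_mod_cast hcard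
    linarith
  have hfinal : ((M : ℝ) - 2) * δ ≤ ∑ i ∈ range n, |p i - q i| := by
    rw [htotal]
    calc ((M : ℝ) - 2) * δ ≤ ((range M \ B).card : ℝ) * δ :=
          mul_le_mul_of_nonneg_right hcardR hδ.le
      _ ≤ _ := hsum1
  -- final arithmetic
  have hMR : (M : ℝ) * 2 = n := by
    have := congrArg (fun k : ℕ => (k : ℝ)) h2M
    push_cast at this
    linarith
  have hMn : (M : ℝ) = (n : ℝ) / 2 := by linarith
  rw [hδdef, hMn] at hfinal
  have e : (1 / 2 : ℝ) * (((n : ℝ) / 2 - 2) * (c * ε / n)) = c * ε / 4 - c * ε / n := by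
    field_simp
    ring
  have h3 : c * ε / (2 * n) ≤ 1 / n := by
    rw [div_le_div_iff₀ (by positivity) hnR]
    nlinarith
  have hhalf : (1 / 2 : ℝ) * (((n : ℝ) / 2 - 2) * (c * ε / n)) ≤
      (1 / 2) * ∑ i ∈ range n, |p i - q i| := by linarith [hfinal]
  rw [e] at hhalf
  have h5 : c * ε / n - c * ε / (2 * n) ≤ (1 / 2 : ℝ) * (2 / n) := by
    have e1 : c * ε / (n : ℝ) - c * ε / (2 * n) = c * ε / (2 * n) := by ring
    have e2 : (1 / 2 : ℝ) * (2 / n) = 1 / n := by ring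
    rw [e1, e2]
    exact h3
  linarith [hhalf, h5]
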